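/- The maximum size M(G,n) of a pairwise G-distinguishable code in {0,1}^n, where G is the complete graph on {00, 01, 11}, satisfies M(G,n) ≤ |B_n|, where B_n is the set of binary strings of length n all of whose maximal runs of 1's have odd length. -/

import Mathlib

def bpair (x : List Bool) (i : ℕ) : Bool × Bool := (x.getD i false, x.getD (i+1) false)

/-- `G`-distinguishability: `G` is the complete graph on `{00, 01, 11}`. -/
def Gdist (n : ℕ) (x y : List Bool) : Prop :=
  ∃ i, i + 1 < n ∧ bpair x i ≠ bpair y i ∧
    bpair x i ≠ (true, false) ∧ bpair y i ≠ (true, false)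

/-- Every maximal run of 1's in `x` has odd length. -/
def OddRuns (x : List Bool) : Prop :=
  ∀ i l : ℕ, 0 < l → i + l ≤ x.length →
    (∀ j < l, x.getD (i + j) false = true) →
    (i = 0 ∨ x.getD (i - 1) false = false) →
    (i + l = x.length ∨ x.getD (i + l) false = false) →
    Odd l

/-- `Bset n`: binary strings of length `n` all of whose maximal runs of 1's are odd. -/
def Bset (n : ℕ) : Set (List Bool) := {x | x.length = n ∧ OddRuns x}

/- ### Auxiliary development -/

/-- `go p x` shortens each even-length maximal run of 1's in `x` by flipping its
last 1 to a 0; `p` records the parity of the current partial run of 1's. -/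
def go : Bool → List Bool → List Bool
  | _, [] => []
  | _, false :: t => false :: go false t
  | p, true :: t => (if t.headD false = false then !p else true) :: go (!p) t

lemma go_length : ∀ (p : Bool) (x : List Bool), (go p x).length = x.length
  | _, [] => rfl
  | _, false :: t => by simp [go, go_length false t]
  | p, true :: t => by simp [go, go_length (!p) t]

lemma go_parity (p q : Bool) {r : List Bool} (h : r.headD false = false) :
    go p r = go q r := by
  cases r with
  | nil => rfl
  | cons a t =>
    cases a with
    | false => rfl
    | true => simp at h

lemma go_headD (x : List Bool) : (go false x).headD false = x.headD false := by
  cases x with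
  | nil => rfl
  | cons a t =>
    cases a with
    | false => rfl
    | true => cases h : t.headD false <;> simp [go, h]

lemma getD_zero_headD (t : List Bool) : t.getD 0 false = t.headD false := by
  cases t <;> rfl

lemma bpair_cons (a : Bool) (t : List Bool) (i : ℕ) :
    bpair (a :: t) (i+1) = bpair t i := by
  simp [bpair]

lemma bpair_cons_zero (a : Bool) (t : List Bool) :
    bpair (a :: t) 0 = (a, t.headD false) := by
  cases t <;> rfl

/-- Key injectivity fact: if `go p x = go q y`, then at every position the
bit-pairs of `x` and `y` are either equal or one of them is `10`. -/
lemma go_key : ∀ (x y : List Bool) (p q : Bool), go p x = go q y →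
    ∀ i, bpair x i = bpair y i ∨ bpair x i = (true, false) ∨ bpair y i = (true, false) := by
  intro x
  induction x with
  | nil =>
    intro y p q h i
    cases y with
    | nil => left; rfl
    | cons b y' => simp [go] at h; cases b <;> simp [go] at h
  | cons a x' ih =>
    intro y p q h i
    cases y with
    | nil => cases a <;> simp [go] at h
    | cons b y' =>
      cases a with
      | false =>
        cases b with
        | false =>
          simp [go] at h
          cases i with
          | zero =>
            left
            rw [bpair_cons_zero, bpair_cons_zero, ← go_headD x', ← go_headD y', h]
          | succ i => rw [bpair_cons, bpair_cons]; exact ih y' false false h i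
        | true =>
          simp [go] at h
          obtain ⟨⟨hy, -⟩, h2⟩ := h
          have hy' : y'.headD false = false := by cases y' <;> simp_all
          cases i with
          | zero => right; right; rw [bpair_cons_zero, hy']
          | succ i => rw [bpair_cons, bpair_cons]; exact ih y' false (!q) h2 i
      | true =>
        cases b with
        | false =>
          simp [go] at h
          obtain ⟨⟨hx, -⟩, h2⟩ := h
          have hx' : x'.headD false = false := by cases x' <;> simp_all
          cases i with
          | zero => right; left; rw [bpair_cons_zero, hx']
          | succ i => rw [bpair_cons, bpair_cons]; exact ih y' (!p) false h2 i
        | true =>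
          simp [go] at h
          obtain ⟨-, h2⟩ := h
          cases i with
          | zero =>
            rw [bpair_cons_zero, bpair_cons_zero]
            cases hx : x'.headD false <;> cases hy : y'.headD false <;> simp
          | succ i => rw [bpair_cons, bpair_cons]; exact ih y' (!p) (!q) h2 i

/-- Action of `go` on a maximal run of 1's. -/
lemma go_run : ∀ (m : ℕ) (p : Bool) (r : List Bool), r.headD false = false →
    go p (List.replicate (m+1) true ++ r) =
      List.replicate m true ++ ((xor p (decide ((m+1) % 2 = 1))) :: go false r) := by
  intro m
  induction m with
  | zero =>
    intro p r hr
    show (if r.headD false = false then !p else true) :: go (!p) r = _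
    rw [if_pos hr, go_parity (!p) false hr]
    cases p <;> rfl
  | succ m ih =>
    intro p r hr
    have hcons : List.replicate (m+1+1) true ++ r = true :: (List.replicate (m+1) true ++ r) := by
      simp [List.replicate_succ]
    have hhead : (List.replicate (m+1) true ++ r).headD false = true := by
      rw [show List.replicate (m+1) true ++ r = true :: (List.replicate m true ++ r) by
        simp [List.replicate_succ]]
      rfl
    rw [hcons]
    rw [show go p (true :: (List.replicate (m+1) true ++ r)) =
        (if (List.replicate (m+1) true ++ r).headD false = false then !p else true)
          :: go (!p) (List.replicate (m+1) true ++ r) from rfl]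
    rw [hhead, if_neg (by simp)]
    rw [ih (!p) r hr]
    rw [show List.replicate (m+1) true = true :: List.replicate m true from rfl]
    simp only [List.cons_append, List.cons.injEq, true_and]
    congr 2
    have h2 : decide ((m+1+1) % 2 = 1) = !decide ((m+1) % 2 = 1) := by
      by_cases h : (m+1) % 2 = 1 <;> simp [h] <;> omega
    rw [h2]
    cases p <;> cases hm : decide ((m+1) % 2 = 1) <;> rfl

lemma getD_replicate_true {m j : ℕ} (h : j < m) :
    (List.replicate m true).getD j false = true := by
  rw [List.getD_eq_getElem _ _ (by simpa using h)]
  simp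

lemma oddRuns_nil : OddRuns [] := by
  intro i l hl hle _ _ _
  simp at hle; omega

lemma oddRuns_cons_false {t : List Bool} (h : OddRuns t) : OddRuns (false :: t) := by
  intro i l hl hle htr hleft hright
  rcases Nat.eq_zero_or_pos i with hi | hi
  · subst hi
    have := htr 0 hl
    simp [List.getD] at this
  obtain ⟨i', rfl⟩ : ∃ i', i = i' + 1 := ⟨i - 1, by omega⟩
  simp only [List.length_cons] at hle hright
  refine h i' l hl (by omega) ?_ ?_ ?_
  · intro j hj
    have := htr j hj
    simpa [show i' + 1 + j = (i' + j) + 1 by omega, List.getD_cons_succ] using this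
  · rcases hleft with h0 | hfalse
    · omega
    · rcases Nat.eq_zero_or_pos i' with rfl | hi'
      · left; rfl
      · right
        obtain ⟨i'', rfl⟩ : ∃ i'', i' = i'' + 1 := ⟨i' - 1, by omega⟩
        simpa [List.getD_cons_succ] using hfalse
  · rcases hright with h0 | hfalse
    · left; omega
    · right; simpa [show i' + 1 + l = (i' + l) + 1 by omega, List.getD_cons_succ] using hfalse

/-- Prepending an odd run of 1's to a string starting with 0 preserves `OddRuns`. -/
lemma oddRuns_replicate_append {m : ℕ} (hm : Odd m) {z : List Bool}
    (hz : z.getD 0 false = false) (h : OddRuns z) :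
    OddRuns (List.replicate m true ++ z) := by
  have hm1 : 1 ≤ m := hm.pos
  set w := List.replicate m true ++ z with hw
  have hwlen : w.length = m + z.length := by simp [hw]
  have hwl : ∀ j, j < m → w.getD j false = true := by
    intro j hj
    rw [hw, List.getD_append _ _ _ _ (by simpa using hj)]
    exact getD_replicate_true hj
  have hwr : ∀ j, m ≤ j → w.getD j false = z.getD (j - m) false := by
    intro j hj
    rw [hw, List.getD_append_right _ _ _ _ (by simpa using hj)]
    simp
  intro i l hl hle htr hleft hright
  rw [hwlen] at hle hright
  by_cases hcross : i < m ∧ m < i + l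
  · exfalso
    have h1 : w.getD (i + (m - i)) false = true := htr (m - i) (by omega)
    rw [show i + (m - i) = m by omega, hwr m le_rfl, Nat.sub_self, hz] at h1
    exact Bool.false_ne_true h1
  · push_neg at hcross
    by_cases hcase : i + l ≤ m
    · -- block inside the run
      have hi0 : i = 0 := by
        rcases hleft with h0 | hfalse
        · exact h0
        · exfalso
          have := hwl (i - 1) (by omega)
          rw [this] at hfalse; simp at hfalse
      subst hi0
      have hlm : l = m := by
        rcases Nat.lt_or_ge l m with hlt | hge
        · exfalso
          rcases hright with h0 | hfalse
          · omega
          · rw [Nat.zero_add, hwl l (by omega)] at hfalse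
            simp at hfalse
        · omega
      rw [hlm]; exact hm
    · -- block inside z
      have him : m ≤ i := by
        rcases Nat.lt_or_ge i m with hlt | hge
        · exact absurd (hcross hlt) (by omega)
        · exact hge
      refine h (i - m) l hl (by omega) ?_ ?_ ?_
      · intro j hj
        have := htr j hj
        rw [hwr (i + j) (by omega)] at this
        rwa [show i + j - m = i - m + j by omega] at this
      · rcases Nat.eq_or_lt_of_le him with heq | hgt
        · left; omega
        · right
          rcases hleft with h0 | hfalse
          · omega
          · rw [hwr (i - 1) (by omega)] at hfalse
            rwa [show i - 1 - m = i - m - 1 by omega] at hfalse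
      · rcases hright with h0 | hfalse
        · left; omega
        · right
          rw [hwr (i + l) (by omega)] at hfalse
          rwa [show i + l - m = i - m + l by omega] at hfalse

lemma dropWhile_headD : ∀ (x : List Bool),
    (x.dropWhile (fun b => b)).headD false = false
  | [] => rfl
  | false :: _ => rfl
  | true :: t => dropWhile_headD t

/-- The image of `go false` always has odd runs. -/
lemma oddRuns_go (x : List Bool) : OddRuns (go false x) := by
  suffices h : ∀ N (x : List Bool), x.length ≤ N → OddRuns (go false x) from
    h x.length x le_rfl
  intro N
  induction N with
  | zero =>
    intro x hx
    have : x = [] := by cases x <;> simp_all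
    subst this; exact oddRuns_nil
  | succ N ih =>
    intro x hx
    cases x with
    | nil => exact oddRuns_nil
    | cons a t =>
      have hx' : t.length + 1 ≤ N + 1 := by simpa using hx
      cases a with
      | false =>
        rw [show go false (false :: t) = false :: go false t from rfl]
        exact oddRuns_cons_false (ih t (by omega))
      | true =>
        set k := ((true :: t).takeWhile (fun b => b)).length with hk
        set r := (true :: t).dropWhile (fun b => b) with hr
        have hdecomp : List.replicate k true ++ r = true :: t := by
          rw [hk, hr]
          nth_rewrite 3 [← List.takeWhile_append_dropWhile (p := fun b => b) (l := true :: t)]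
          congr 1
          exact (List.eq_replicate_of_mem (fun b hb => by
            simpa using List.mem_takeWhile_imp hb)).symm
        have hk1 : 1 ≤ k := by
          rw [hk, show (true :: t).takeWhile (fun b => b)
              = true :: t.takeWhile (fun b => b) from rfl]
          simp
        have hrhead : r.headD false = false := dropWhile_headD _
        have hrlen : k + r.length = t.length + 1 := by
          have := congrArg List.length hdecomp
          simpa using this
        have hrN : r.length ≤ N := by omega
        obtain ⟨m, hmk⟩ : ∃ m, k = m + 1 := ⟨k - 1, by omega⟩
        rw [hmk] at hdecomp
        have hgo : go false (true :: t) =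
            List.replicate m true ++ ((xor false (decide ((m+1) % 2 = 1))) :: go false r) := by
          rw [← hdecomp]; exact go_run m false r hrhead
        have hor : OddRuns (go false r) := ih r hrN
        by_cases hodd : (m + 1) % 2 = 1
        · have hb : (xor false (decide ((m+1) % 2 = 1))) = true := by
            rw [decide_eq_true hodd]; rfl
          rw [hgo, hb]
          rw [show List.replicate m true ++ (true :: go false r)
              = List.replicate (m+1) true ++ go false r by
            rw [List.replicate_succ']; simp]
          exact oddRuns_replicate_append (Nat.odd_iff.mpr hodd)
            (by rw [getD_zero_headD, go_headD]; exact hrhead) hor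
        · have hb : (xor false (decide ((m+1) % 2 = 1))) = false := by
            rw [decide_eq_false hodd]; rfl
          rw [hgo, hb]
          have hm_odd : Odd m := by rw [Nat.odd_iff]; omega
          exact oddRuns_replicate_append hm_odd (by rfl)
            (oddRuns_cons_false hor)

/-- Every pairwise `G`-distinguishable code of length `n` has size at most `|B_n|`. -/
theorem stmt9 (n : ℕ) (B : Set (List Bool)) (hB : ∀ x ∈ B, x.length = n)
    (hdist : B.Pairwise (Gdist n)) :
    B.ncard ≤ (Bset n).ncard := by
  have hfin : (Bset n).Finite := by
    refine (List.finite_length_eq Bool n).subset ?_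
    intro x hx; exact hx.1
  have hinj : Set.InjOn (go false) B := by
    intro x hx y hy hxy
    by_contra hne
    obtain ⟨i, -, hpne, hx10, hy10⟩ := hdist hx hy hne
    rcases go_key x y false false hxy i with h | h | h
    · exact hpne h
    · exact hx10 h
    · exact hy10 h
  have himg : (go false) '' B ⊆ Bset n := by
    rintro - ⟨x, hx, rfl⟩
    exact ⟨by rw [go_length]; exact hB x hx, oddRuns_go x⟩
  calc B.ncard = ((go false) '' B).ncard := (Set.ncard_image_of_injOn hinj).symm
    _ ≤ (Bset n).ncard := Set.ncard_le_ncard himg hfin
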